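/- Let A be an integral domain of characteristic p > 0 admitting a p-basis {b_i}_{i∈I}. Then the b_i form a p-basis of the fraction field Frac(A). -/

import Mathlib

/-- The subring of `p`-th powers of `A` (in characteristic `p` this is exactly the image of
the Frobenius). -/
def pthPowers (A : Type*) [CommRing A] (p : ℕ) : Subring A := Subring.closure (Set.range (· ^ p))

/-- `b : I → A` is a `p`-basis of `A`: the monomials `∏ i, b i ^ ϑ i` for finitely supported
`ϑ : I →₀ ℕ` with values `< p` form a basis of `A` as a module over the subring `A^p`. -/
def IsPBasis (p : ℕ) {A : Type*} [CommRing A] {I : Type*} (b : I → A) : Prop :=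
  LinearIndependent (pthPowers A p)
    (fun ϑ : {ϑ : I →₀ ℕ // ∀ i, ϑ i < p} => ϑ.1.prod fun i e => b i ^ e) ∧
  ⊤ ≤ Submodule.span (pthPowers A p)
    (Set.range fun ϑ : {ϑ : I →₀ ℕ // ∀ i, ϑ i < p} => ϑ.1.prod fun i e => b i ^ e)

lemma mem_pthPowers_iff {A : Type*} [CommRing A] {p : ℕ} (hp : p.Prime) [CharP A p] {x : A} :
    x ∈ pthPowers A p ↔ ∃ y : A, y ^ p = x := by
  haveI := Fact.mk hp
  haveI : ExpChar A p := .prime hp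
  constructor
  · intro hx
    have h : pthPowers A p ≤ (frobenius A p).range :=
      Subring.closure_le.mpr (by rintro x ⟨y, rfl⟩; exact ⟨y, frobenius_def ..⟩)
    obtain ⟨y, hy⟩ := h hx
    exact ⟨y, by rw [← hy, frobenius_def]⟩
  · rintro ⟨y, rfl⟩; exact Subring.subset_closure ⟨y, rfl⟩

lemma subring_smul_def {R : Type*} [CommRing R] {S : Subring R} (c : S) (x : R) :
    c • x = (c : R) * x := rfl


/-- If `A` is an integral domain of characteristic `p > 0` with a `p`-basis
`{b_i}_{i ∈ I}`, then the `b_i` form a `p`-basis of the fraction field `Frac(A)`. -/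
theorem isPBasis_fractionRing {A : Type*} [CommRing A] [IsDomain A] (p : ℕ) (hp : p.Prime)
    [CharP A p] {I : Type*} (b : I → A) (hb : IsPBasis p b) :
    IsPBasis p (fun i => algebraMap A (FractionRing A) (b i)) := by
  classical
  haveI := Fact.mk hp
  set K := FractionRing A with hK
  set f : A →+* K := (algebraMap A K : A →+* K) with hf'
  have hf : Function.Injective f := IsFractionRing.injective A K
  haveI : CharP K p := charP_of_injective_ringHom hf p
  have hmono : ∀ ϑ : {ϑ : I →₀ ℕ // ∀ i, ϑ i < p},
      (ϑ.1.prod fun i e => (f (b i)) ^ e) = f (ϑ.1.prod fun i e => b i ^ e) := by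
    intro ϑ
    rw [map_finsuppProd]
    simp [map_pow]
  have hfmem : ∀ c : A, c ∈ pthPowers A p → f c ∈ pthPowers K p := by
    intro c hc
    obtain ⟨d, rfl⟩ := (mem_pthPowers_iff hp).mp hc
    exact (mem_pthPowers_iff hp).mpr ⟨f d, by rw [map_pow]⟩
  constructor
  · rw [linearIndependent_iff]
    intro l hl
    have hroot : ∀ ϑ, ∃ y : K, y ^ p = (l ϑ : K) := fun ϑ => (mem_pthPowers_iff hp).mp (l ϑ).2
    choose x hx using hroot
    obtain ⟨s, hs⟩ := IsLocalization.exist_integer_multiples (nonZeroDivisors A) l.support x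
    have key : ∀ ϑ, ∃ a : A, f a = (s : A) • (if ϑ ∈ l.support then x ϑ else 0) := by
      intro ϑ
      by_cases h : ϑ ∈ l.support
      · rw [if_pos h]; exact hs ϑ h
      · exact ⟨0, by simp [h]⟩
    choose a ha using key
    have ha0 : ∀ ϑ, ϑ ∉ l.support → a ϑ = 0 := by
      intro ϑ h
      apply hf
      rw [ha ϑ, map_zero]
      simp [h]
    set l' : {ϑ : I →₀ ℕ // ∀ i, ϑ i < p} →₀ (pthPowers A p) :=
      Finsupp.onFinset l.support
        (fun ϑ => ⟨a ϑ ^ p, (mem_pthPowers_iff hp).mpr ⟨a ϑ, rfl⟩⟩)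
        (fun ϑ hϑ => by
          by_contra h
          exact hϑ (Subtype.ext (by simp [ha0 ϑ h, zero_pow hp.ne_zero]))) with hl'
    have hsne : f (s : A) ≠ 0 := fun h0 => nonZeroDivisors.ne_zero s.2 (hf (by simpa using h0))
    have hcomb : Finsupp.linearCombination (pthPowers A p)
        (fun ϑ : {ϑ : I →₀ ℕ // ∀ i, ϑ i < p} => ϑ.1.prod fun i e => b i ^ e) l' = 0 := by
      apply hf
      rw [map_zero, Finsupp.linearCombination_apply,
        Finsupp.sum_of_support_subset l' Finsupp.support_onFinset_subset _ (by simp), map_sum]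
      have h0 : ∀ ϑ ∈ l.support,
          f (l' ϑ • (ϑ.1.prod fun i e => b i ^ e))
            = f (s : A) ^ p * ((l ϑ : K) * (ϑ.1.prod fun i e => (f (b i)) ^ e)) := by
        intro ϑ hϑ
        have hfa : f (a ϑ) = f (s : A) * x ϑ := by
          rw [ha ϑ]; simp [hϑ, Algebra.smul_def]; exact Or.inl rfl
        have hcoe : (l' ϑ : A) = a ϑ ^ p := rfl
        rw [subring_smul_def, map_mul, hcoe, map_pow, hfa, mul_pow, hx, hmono]
        ring
      rw [Finset.sum_congr rfl h0, ← Finset.mul_sum]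
      have h1 : ∑ ϑ ∈ l.support, (l ϑ : K) * (ϑ.1.prod fun i e => (f (b i)) ^ e) = 0 := by
        have h2 := hl
        rw [Finsupp.linearCombination_apply, Finsupp.sum] at h2
        simp only [subring_smul_def] at h2
        exact h2
      rw [h1, mul_zero]
    have hl'0 := linearIndependent_iff.mp hb.1 l' hcomb
    ext ϑ
    by_contra h
    have hϑ : ϑ ∈ l.support := Finsupp.mem_support_iff.mpr (fun hh => h (by simp [hh]))
    have hap : a ϑ ^ p = (0 : A) := Subtype.ext_iff.mp (DFunLike.congr_fun hl'0 ϑ)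
    have haz : a ϑ = 0 := (pow_eq_zero_iff hp.ne_zero).mp hap
    have hxz : x ϑ = 0 := by
      have h3 := ha ϑ
      rw [haz, map_zero] at h3
      simp only [hϑ, if_pos, Algebra.smul_def] at h3
      exact (mul_eq_zero.mp h3.symm).resolve_left hsne
    have hlz : (l ϑ : K) = 0 := by rw [← hx ϑ, hxz, zero_pow hp.ne_zero]
    exact h (by simpa using hlz)
  · rintro z -
    have hA : ∀ y : A, f y ∈ Submodule.span (pthPowers K p)
        (Set.range fun ϑ : {ϑ : I →₀ ℕ // ∀ i, ϑ i < p} =>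
          ϑ.1.prod fun i e => (f (b i)) ^ e) := by
      intro y
      have hy : y ∈ Submodule.span (pthPowers A p)
          (Set.range fun ϑ : {ϑ : I →₀ ℕ // ∀ i, ϑ i < p} =>
            ϑ.1.prod fun i e => b i ^ e) := hb.2 Submodule.mem_top
      induction hy using Submodule.span_induction with
      | mem w hw =>
          obtain ⟨ϑ, rfl⟩ := hw
          exact Submodule.subset_span ⟨ϑ, hmono ϑ⟩
      | zero => simp
      | add u v _ _ hu hv => rw [map_add]; exact add_mem hu hv
      | smul c u _ hu =>
          have h1 : f (c • u) = (⟨f (c : A), hfmem _ c.2⟩ : pthPowers K p) • f u := by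
            rw [subring_smul_def, subring_smul_def, map_mul]
          rw [h1]
          exact Submodule.smul_mem _ _ hu
    obtain ⟨n, d, hd, hz⟩ := IsFractionRing.div_surjective (A := A) z
    have hdz : f d ≠ 0 := fun h0 => nonZeroDivisors.ne_zero hd (hf (by simpa using h0))
    have hzz : z = ((f d)⁻¹) ^ p * f (n * d ^ (p - 1)) := by
      rw [← hz, map_mul, map_pow]
      field_simp
      show f n / f d = (f d)⁻¹ ^ p * f n * f d ^ (p - 1)
      have hpe : f d ^ p = f d ^ (p - 1) * f d := by
        conv_lhs => rw [← Nat.succ_pred_eq_of_pos hp.pos]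
        rw [pow_succ, Nat.pred_eq_sub_one]
      rw [inv_pow, hpe, mul_inv, div_eq_mul_inv, show (f d ^ (p - 1))⁻¹ * (f d)⁻¹ * f n * f d ^ (p - 1) = ((f d ^ (p - 1))⁻¹ * f d ^ (p - 1)) * (f n * (f d)⁻¹) by ring, inv_mul_cancel₀ (pow_ne_zero (p - 1) hdz), one_mul]
    rw [hzz]
    have hmem : ((f d)⁻¹) ^ p ∈ pthPowers K p := (mem_pthPowers_iff hp).mpr ⟨(f d)⁻¹, rfl⟩
    have h4 := Submodule.smul_mem _ (⟨((f d)⁻¹) ^ p, hmem⟩ : pthPowers K p)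
      (hA (n * d ^ (p - 1)))
    rw [subring_smul_def] at h4
    exact h4
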